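/- arXiv:1201.5565 — 3 statements merged into one kernel-verified Lean document; each statement's English description precedes it below -/
import Mathlib

section
/- Let M be an almost cosymplectic (κ,μ)-space of dimension ≥ 5 with κ < 0 such that κ and μ only vary in the direction of ξ. Then the Riemann curvature tensor of M can be written as R = -κ R₃ - R_{5,2} - μ R₆, where R₃(X,Y)Z = η(X)η(Z)Y - η(Y)η(Z)X + g(X,Z)η(Y)ξ - g(Y,Z)η(X)ξ, R_{5,2}(X,Y)Z = g(φhY,Z)φhX - g(φhX,Z)φhY, and R₆(X,Y)Z = η(X)η(Z)hY - η(Y)η(Z)hX + g(hX,Z)η(Y)ξ - g(hY,Z)η(X)ξ. -/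
open scoped InnerProductSpace

variable {V : Type*} [NormedAddCommGroup V] [InnerProductSpace ℝ V]

/-- R₁(X,Y)Z = g(Y,Z)X - g(X,Z)Y -/
noncomputable def R1 (X Y Z : V) : V := ⟪Y, Z⟫_ℝ • X - ⟪X, Z⟫_ℝ • Y

/-- R₂(X,Y)Z = g(X,φZ)φY - g(Y,φZ)φX + 2g(X,φY)φZ -/
noncomputable def R2 (φ : V →ₗ[ℝ] V) (X Y Z : V) : V :=
  ⟪X, φ Z⟫_ℝ • φ Y - ⟪Y, φ Z⟫_ℝ • φ X + (2 * ⟪X, φ Y⟫_ℝ) • φ Z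

/-- R₃(X,Y)Z = η(X)η(Z)Y - η(Y)η(Z)X + g(X,Z)η(Y)ξ - g(Y,Z)η(X)ξ -/
noncomputable def R3 (η : V →ₗ[ℝ] ℝ) (ξ : V) (X Y Z : V) : V :=
  (η X * η Z) • Y - (η Y * η Z) • X + (⟪X, Z⟫_ℝ * η Y) • ξ - (⟪Y, Z⟫_ℝ * η X) • ξ

/-- R₄(X,Y)Z = g(Y,Z)hX - g(X,Z)hY + g(hY,Z)X - g(hX,Z)Y -/
noncomputable def R4 (h : V →ₗ[ℝ] V) (X Y Z : V) : V :=
  ⟪Y, Z⟫_ℝ • h X - ⟪X, Z⟫_ℝ • h Y + ⟪h Y, Z⟫_ℝ • X - ⟪h X, Z⟫_ℝ • Y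

/-- R_{5,1}(X,Y)Z = g(hY,Z)hX - g(hX,Z)hY -/
noncomputable def R51 (h : V →ₗ[ℝ] V) (X Y Z : V) : V :=
  ⟪h Y, Z⟫_ℝ • h X - ⟪h X, Z⟫_ℝ • h Y

/-- R_{5,2}(X,Y)Z = g(φhY,Z)φhX - g(φhX,Z)φhY -/
noncomputable def R52 (φ h : V →ₗ[ℝ] V) (X Y Z : V) : V :=
  ⟪φ (h Y), Z⟫_ℝ • φ (h X) - ⟪φ (h X), Z⟫_ℝ • φ (h Y)

/-- R₆(X,Y)Z = η(X)η(Z)hY - η(Y)η(Z)hX + g(hX,Z)η(Y)ξ - g(hY,Z)η(X)ξ -/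
noncomputable def R6 (η : V →ₗ[ℝ] ℝ) (ξ : V) (h : V →ₗ[ℝ] V) (X Y Z : V) : V :=
  (η X * η Z) • h Y - (η Y * η Z) • h X + (⟪h X, Z⟫_ℝ * η Y) • ξ - (⟪h Y, Z⟫_ℝ * η X) • ξ

/-- R₇(X,Y)Z = g(Y,Z)φhX - g(X,Z)φhY + g(φhY,Z)X - g(φhX,Z)Y -/
noncomputable def R7 (φ h : V →ₗ[ℝ] V) (X Y Z : V) : V :=
  ⟪Y, Z⟫_ℝ • φ (h X) - ⟪X, Z⟫_ℝ • φ (h Y) + ⟪φ (h Y), Z⟫_ℝ • X - ⟪φ (h X), Z⟫_ℝ • Y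

/-- R₈(X,Y)Z = η(X)η(Z)φhY - η(Y)η(Z)φhX + g(φhX,Z)η(Y)ξ - g(φhY,Z)η(X)ξ -/
noncomputable def R8 (η : V →ₗ[ℝ] ℝ) (ξ : V) (φ h : V →ₗ[ℝ] V) (X Y Z : V) : V :=
  (η X * η Z) • φ (h Y) - (η Y * η Z) • φ (h X)
    + (⟪φ (h X), Z⟫_ℝ * η Y) • ξ - (⟪φ (h Y), Z⟫_ℝ * η X) • ξ

section Aux

variable (φ h : V →ₗ[ℝ] V) (ξ : V) (η : V →ₗ[ℝ] ℝ) (κ μ : ℝ)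

/-- The right-hand side of the curvature writing. -/
noncomputable def rhsACS (X Y Z : V) : V :=
  -κ • R3 η ξ X Y Z - R52 φ h X Y Z - μ • R6 η ξ h X Y Z

lemma rhsACS_add1 (X X' Y Z : V) :
    rhsACS φ h ξ η κ μ (X + X') Y Z
      = rhsACS φ h ξ η κ μ X Y Z + rhsACS φ h ξ η κ μ X' Y Z := by
  simp only [rhsACS, R3, R52, R6, map_add, inner_add_left]
  module

lemma rhsACS_add2 (X Y Y' Z : V) :
    rhsACS φ h ξ η κ μ X (Y + Y') Z
      = rhsACS φ h ξ η κ μ X Y Z + rhsACS φ h ξ η κ μ X Y' Z := by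
  simp only [rhsACS, R3, R52, R6, map_add, inner_add_left]
  module

lemma rhsACS_add3 (X Y Z Z' : V) :
    rhsACS φ h ξ η κ μ X Y (Z + Z')
      = rhsACS φ h ξ η κ μ X Y Z + rhsACS φ h ξ η κ μ X Y Z' := by
  simp only [rhsACS, R3, R52, R6, map_add, inner_add_right]
  module

lemma rhsACS_smul1 (c : ℝ) (X Y Z : V) :
    rhsACS φ h ξ η κ μ (c • X) Y Z = c • rhsACS φ h ξ η κ μ X Y Z := by
  simp only [rhsACS, R3, R52, R6, map_smul, real_inner_smul_left, smul_eq_mul]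
  module

lemma rhsACS_smul2 (c : ℝ) (X Y Z : V) :
    rhsACS φ h ξ η κ μ X (c • Y) Z = c • rhsACS φ h ξ η κ μ X Y Z := by
  simp only [rhsACS, R3, R52, R6, map_smul, real_inner_smul_left, smul_eq_mul]
  module

lemma rhsACS_smul3 (c : ℝ) (X Y Z : V) :
    rhsACS φ h ξ η κ μ X Y (c • Z) = c • rhsACS φ h ξ η κ μ X Y Z := by
  simp only [rhsACS, R3, R52, R6, map_smul, real_inner_smul_right, smul_eq_mul]
  module

lemma rhsACS_skew (X Y Z : V) :
    rhsACS φ h ξ η κ μ X Y Z = -rhsACS φ h ξ η κ μ Y X Z := by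
  simp only [rhsACS, R3, R52, R6]
  module

lemma rhsACS_pure (X Y Z : V) (eX : η X = 0) (eY : η Y = 0) (eZ : η Z = 0) :
    rhsACS φ h ξ η κ μ X Y Z
      = ⟪φ (h X), Z⟫_ℝ • φ (h Y) - ⟪φ (h Y), Z⟫_ℝ • φ (h X) := by
  simp only [rhsACS, R3, R52, R6, eX, eY, eZ, zero_mul, mul_zero, zero_smul]
  module

end Aux

/-- An almost cosymplectic (κ,μ)-space of dimension ≥ 5 with κ < 0,
with κ, μ varying only in the direction of ξ, has curvature tensor
R = -κ R₃ - R_{5,2} - μ R₆. -/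
theorem cosymplectic_curvature_writing
    (φ h : V →ₗ[ℝ] V) (ξ : V) (η : V →ₗ[ℝ] ℝ)
    (R : V →ₗ[ℝ] V →ₗ[ℝ] V →ₗ[ℝ] V) (κ μ : ℝ)
    {n : ℕ} (hn : 2 ≤ n) (hdim : Module.finrank ℝ V = 2 * n + 1)
    (hκ : κ < 0)
    -- almost contact metric structure
    (hηξ : η ξ = 1)
    (hφ2 : ∀ X : V, φ (φ X) = -X + η X • ξ)
    (hmetric : ∀ X Y : V, ⟪φ X, φ Y⟫_ℝ = ⟪X, Y⟫_ℝ - η X * η Y)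
    -- properties of h
    (hsym : ∀ X Y : V, ⟪h X, Y⟫_ℝ = ⟪X, h Y⟫_ℝ)
    (hhξ : h ξ = 0)
    (hanti : ∀ X : V, h (φ X) = -φ (h X))
    -- the (κ,μ) curvature condition
    (hRXYξ : ∀ X Y : V, R X Y ξ = κ • (η Y • X - η X • Y) + μ • (η Y • h X - η X • h Y))
    -- formula (eq-R-xi-x-y) with ν = 0
    (hRξ : ∀ X Y : V, R ξ X Y = κ • (⟪X, Y⟫_ℝ • ξ - η Y • X) + μ • (⟪h X, Y⟫_ℝ • ξ - η Y • h X))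
    (hRskew : ∀ X Y Z : V, R X Y Z = -R Y X Z)
    -- the eigenspace decomposition TM = D(λ) ⊕ D(-λ) ⊕ ⟨ξ⟩, λ = √(-κ)
    (hdecomp : ∀ X : V, ∃ Xp Xm : V, h Xp = Real.sqrt (-κ) • Xp
        ∧ h Xm = (-Real.sqrt (-κ)) • Xm ∧ X = Xp + Xm + η X • ξ)
    -- Endo's formulas on the eigenspaces
    (hE1 : ∀ X Y Z : V, h X = Real.sqrt (-κ) • X → h Y = Real.sqrt (-κ) • Y →
        h Z = (-Real.sqrt (-κ)) • Z →
        R X Y Z = κ • (⟪φ Y, Z⟫_ℝ • φ X - ⟪φ X, Z⟫_ℝ • φ Y))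
    (hE2 : ∀ X Y Z : V, h X = (-Real.sqrt (-κ)) • X → h Y = (-Real.sqrt (-κ)) • Y →
        h Z = Real.sqrt (-κ) • Z →
        R X Y Z = κ • (⟪φ Y, Z⟫_ℝ • φ X - ⟪φ X, Z⟫_ℝ • φ Y))
    (hE3 : ∀ X Y Z : V, h X = Real.sqrt (-κ) • X → h Y = (-Real.sqrt (-κ)) • Y →
        h Z = (-Real.sqrt (-κ)) • Z →
        R X Y Z = (-κ * ⟪X, φ Z⟫_ℝ) • φ Y)
    (hE4 : ∀ X Y Z : V, h X = Real.sqrt (-κ) • X → h Y = (-Real.sqrt (-κ)) • Y →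
        h Z = Real.sqrt (-κ) • Z →
        R X Y Z = (-κ * ⟪Z, φ Y⟫_ℝ) • φ X)
    (hE5 : ∀ X Y Z : V, h X = Real.sqrt (-κ) • X → h Y = Real.sqrt (-κ) • Y →
        h Z = Real.sqrt (-κ) • Z → R X Y Z = 0)
    (hE6 : ∀ X Y Z : V, h X = (-Real.sqrt (-κ)) • X → h Y = (-Real.sqrt (-κ)) • Y →
        h Z = (-Real.sqrt (-κ)) • Z → R X Y Z = 0) :
    ∀ X Y Z : V, R X Y Z
      = -κ • R3 η ξ X Y Z - R52 φ h X Y Z - μ • R6 η ξ h X Y Z := by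
  have hrhs : ∀ X Y Z : V,
      -κ • R3 η ξ X Y Z - R52 φ h X Y Z - μ • R6 η ξ h X Y Z
        = rhsACS φ h ξ η κ μ X Y Z := fun _ _ _ => rfl
  set l := Real.sqrt (-κ) with hldef
  have hκ' : (0:ℝ) < -κ := by linarith
  have hl2 : l * l = -κ := Real.mul_self_sqrt (le_of_lt hκ')
  have hlpos : 0 < l := Real.sqrt_pos.mpr hκ'
  have hκl : κ = -(l * l) := by linarith
  have hξ0 : ξ ≠ 0 := by
    intro hc
    rw [hc, map_zero] at hηξ
    exact one_ne_zero hηξ.symm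
  have hcube : ∀ X : V, η (φ X) • ξ = η X • φ ξ := by
    intro X
    have h1 : φ (φ (φ X)) = -φ X + η (φ X) • ξ := hφ2 (φ X)
    have h2 : φ (φ (φ X)) = -φ X + η X • φ ξ := by
      rw [hφ2 X, map_add, map_neg, map_smul]
    rw [h1] at h2
    exact add_left_cancel h2
  have hφξ : φ ξ = 0 := by
    have h1 := hcube ξ
    rw [hηξ, one_smul] at h1
    have h3 : η (φ (φ ξ)) = 0 := by
      rw [hφ2 ξ, map_add, map_neg, map_smul, hηξ, smul_eq_mul, mul_one, neg_add_cancel]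
    have h2 := hcube (φ ξ)
    rw [h3, zero_smul] at h2
    have h2' : (0 : V) = (η (φ ξ) * η (φ ξ)) • ξ := by
      rw [mul_smul, h1]; exact h2
    have h4 : η (φ ξ) = 0 := by
      by_contra hne
      have h5 : η (φ ξ) * η (φ ξ) ≠ 0 := mul_ne_zero hne hne
      exact hξ0 ((smul_eq_zero.mp h2'.symm).resolve_left h5)
    rw [← h1, h4, zero_smul]
  have hηφ : ∀ X : V, η (φ X) = 0 := by
    intro X
    have h1 := hcube X
    rw [hφξ, smul_zero] at h1
    exact (smul_eq_zero.mp h1).resolve_right hξ0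
  have hinξ : ∀ X : V, ⟪X, ξ⟫_ℝ = η X := by
    intro X
    have h1 := hmetric X ξ
    rw [hφξ, inner_zero_right, hηξ, mul_one] at h1
    linarith
  have hskewφ : ∀ X Y : V, ⟪φ X, Y⟫_ℝ = -⟪X, φ Y⟫_ℝ := by
    intro X Y
    have h1 := hmetric X (φ Y)
    rw [hηφ Y, mul_zero, sub_zero, hφ2 Y, inner_add_right, inner_neg_right,
      real_inner_smul_right, hinξ (φ X), hηφ X, mul_zero, add_zero] at h1
    linarith
  have hηh : ∀ X : V, η (h X) = 0 := by
    intro X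
    rw [← hinξ, hsym, hhξ, inner_zero_right]
  have hortho : ∀ U W : V, h U = l • U → h W = (-l) • W → ⟪U, W⟫_ℝ = 0 := by
    intro U W hU hW
    have h1 := hsym U W
    rw [hU, hW, real_inner_smul_left, real_inner_smul_right] at h1
    nlinarith
  have hortho' : ∀ U W : V, h U = l • U → h W = (-l) • W → ⟪W, U⟫_ℝ = 0 := by
    intro U W hU hW
    rw [real_inner_comm]
    exact hortho U W hU hW
  have hηp : ∀ U : V, h U = l • U → η U = 0 := by
    intro U hU
    have h1 := hsym U ξ
    rw [hhξ, inner_zero_right, hU, real_inner_smul_left, hinξ] at h1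
    rcases mul_eq_zero.mp h1 with h2 | h2
    · exact absurd h2 (ne_of_gt hlpos)
    · exact h2
  have hηm : ∀ U : V, h U = (-l) • U → η U = 0 := by
    intro U hU
    have h1 := hsym U ξ
    rw [hhξ, inner_zero_right, hU, real_inner_smul_left, hinξ] at h1
    rcases mul_eq_zero.mp h1 with h2 | h2
    · exact absurd h2 (ne_of_lt (neg_neg_of_pos hlpos))
    · exact h2
  have hφp : ∀ U : V, h U = l • U → h (φ U) = (-l) • φ U := by
    intro U hU
    rw [hanti U, hU, map_smul, neg_smul]
  have hφm : ∀ U : V, h U = (-l) • U → h (φ U) = l • φ U := by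
    intro U hU
    rw [hanti U, hU, map_smul, neg_smul, neg_neg]
  -- key eigenvector cases with X ∈ D(λ), or X, Y ∈ D(-λ)
  have hkeyA : ∀ X Y Z : V, h X = l • X →
      (h Y = l • Y ∨ h Y = (-l) • Y) → (h Z = l • Z ∨ h Z = (-l) • Z) →
      R X Y Z = rhsACS φ h ξ η κ μ X Y Z := by
    intro X Y Z hX pY pZ
    rcases pY with hY | hY <;> rcases pZ with hZ | hZ <;>
      rw [rhsACS_pure φ h ξ η κ μ X Y Z (hηp X hX)
        (by first | exact hηp Y hY | exact hηm Y hY)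
        (by first | exact hηp Z hZ | exact hηm Z hZ)]
    · -- (+,+,+)
      rw [hE5 X Y Z hX hY hZ, hX, hY, map_smul, map_smul,
        real_inner_smul_left, real_inner_smul_left,
        hortho' Z (φ X) hZ (hφp X hX), hortho' Z (φ Y) hZ (hφp Y hY)]
      simp
    · -- (+,+,-)
      rw [hE1 X Y Z hX hY hZ, hX, hY, map_smul, map_smul, hκl]
      simp only [real_inner_smul_left, smul_smul]
      module
    · -- (+,-,+)
      rw [hE4 X Y Z hX hY hZ, real_inner_comm (φ Y) Z, hX, hY, map_smul, map_smul, hκl]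
      simp only [real_inner_smul_left, smul_smul]
      rw [hortho' Z (φ X) hZ (hφp X hX)]
      module
    · -- (+,-,-)
      have hsk : ⟪X, φ Z⟫_ℝ = -⟪φ X, Z⟫_ℝ := by
        have := hskewφ X Z; linarith
      rw [hE3 X Y Z hX hY hZ, hsk, hX, hY, map_smul, map_smul, hκl]
      simp only [real_inner_smul_left, smul_smul]
      rw [hortho (φ Y) Z (hφm Y hY) hZ]
      module
  have hkeyB : ∀ X Y Z : V, h X = (-l) • X → h Y = (-l) • Y →
      (h Z = l • Z ∨ h Z = (-l) • Z) →
      R X Y Z = rhsACS φ h ξ η κ μ X Y Z := by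
    intro X Y Z hX hY pZ
    rcases pZ with hZ | hZ <;>
      rw [rhsACS_pure φ h ξ η κ μ X Y Z (hηm X hX) (hηm Y hY)
        (by first | exact hηp Z hZ | exact hηm Z hZ)]
    · -- (-,-,+)
      rw [hE2 X Y Z hX hY hZ, hX, hY, map_smul, map_smul, hκl]
      simp only [real_inner_smul_left, smul_smul]
      module
    · -- (-,-,-)
      rw [hE6 X Y Z hX hY hZ, hX, hY, map_smul, map_smul,
        real_inner_smul_left, real_inner_smul_left,
        hortho (φ X) Z (hφm X hX) hZ, hortho (φ Y) Z (hφm Y hY) hZ]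
      simp
  have hkey : ∀ X Y Z : V, (h X = l • X ∨ h X = (-l) • X) →
      (h Y = l • Y ∨ h Y = (-l) • Y) → (h Z = l • Z ∨ h Z = (-l) • Z) →
      R X Y Z = rhsACS φ h ξ η κ μ X Y Z := by
    intro X Y Z pX pY pZ
    rcases pX with hX | hX
    · exact hkeyA X Y Z hX pY pZ
    · rcases pY with hY | hY
      · rw [hRskew X Y Z, hkeyA Y X Z hY (Or.inr hX) pZ, ← rhsACS_skew]
      · exact hkeyB X Y Z hX hY pZ
  -- the ξ cases
  have hEξ3 : ∀ X Y : V, R X Y ξ = rhsACS φ h ξ η κ μ X Y ξ := by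
    intro X Y
    rw [hRXYξ X Y]
    simp only [rhsACS, R3, R52, R6, hηξ, mul_one, hinξ, hηφ, hηh,
      zero_smul, smul_zero, zero_mul, mul_zero, sub_zero]
    module
  have hEξ1 : ∀ Y Z : V, R ξ Y Z = rhsACS φ h ξ η κ μ ξ Y Z := by
    intro Y Z
    have hiξZ : ⟪ξ, Z⟫_ℝ = η Z := by rw [real_inner_comm, hinξ]
    rw [hRξ Y Z]
    simp only [rhsACS, R3, R52, R6, hηξ, mul_one, one_mul, hhξ, map_zero,
      inner_zero_left, hiξZ, zero_smul, smul_zero, zero_mul, mul_zero, sub_zero]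
    module
  have hEξ2 : ∀ X Z : V, R X ξ Z = rhsACS φ h ξ η κ μ X ξ Z := by
    intro X Z
    rw [hRskew X ξ Z, hEξ1 X Z, ← rhsACS_skew]
  -- assemble via trilinearity
  have stepZ : ∀ X Y : V, (h X = l • X ∨ h X = (-l) • X) →
      (h Y = l • Y ∨ h Y = (-l) • Y) → ∀ Z : V,
      R X Y Z = rhsACS φ h ξ η κ μ X Y Z := by
    intro X Y pX pY Z
    obtain ⟨Zp, Zm, e1, e2, e3⟩ := hdecomp Z
    rw [e3, map_add, map_add, map_smul, rhsACS_add3, rhsACS_add3, rhsACS_smul3,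
      hkey X Y Zp pX pY (Or.inl e1), hkey X Y Zm pX pY (Or.inr e2), hEξ3 X Y]
  have stepY : ∀ X : V, (h X = l • X ∨ h X = (-l) • X) → ∀ Y Z : V,
      R X Y Z = rhsACS φ h ξ η κ μ X Y Z := by
    intro X pX Y Z
    obtain ⟨Yp, Ym, e1, e2, e3⟩ := hdecomp Y
    rw [e3]
    simp only [map_add, map_smul, LinearMap.add_apply, LinearMap.smul_apply]
    rw [rhsACS_add2, rhsACS_add2, rhsACS_smul2,
      stepZ X Yp pX (Or.inl e1) Z, stepZ X Ym pX (Or.inr e2) Z, hEξ2 X Z]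
  intro X Y Z
  rw [hrhs X Y Z]
  obtain ⟨Xp, Xm, e1, e2, e3⟩ := hdecomp X
  rw [e3]
  simp only [map_add, map_smul, LinearMap.add_apply, LinearMap.smul_apply]
  rw [rhsACS_add1, rhsACS_add1, rhsACS_smul1,
    stepY Xp (Or.inl e1) Y Z, stepY Xm (Or.inr e2) Y Z, hEξ1 Y Z]
end

section
/- There is no almost contact metric manifold of dimension ≥ 5 with almost cosymplectic structure whose curvature tensor admits a writing R = f₁R₁ + ... + f₈R₈ (generalized (κ,μ,ν)-space form) with f₁ - f₃ < 0, assuming: (a) every such manifold, viewed as a (f₁-f₃, f₄-f₆, f₇-f₈)-space, has curvature R = -(f₁-f₃)R₃ - R_{5,2} - (f₄-f₆)R₆ - (f₇-f₈)R₈, and (b) the writing of the curvature tensor as a combination of R₁, R₂, R₃, R₄, R_{5,1}, R_{5,2}, R₆, R₇, R₈ is unique. (The contradiction arises since the two writings force f₅ = 0 and f₅ = 1 for the R_{5,1} and R_{5,2} coefficients.) -/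
open scoped InnerProductSpace

variable {V : Type*} [NormedAddCommGroup V] [InnerProductSpace ℝ V]

/-- There is no almost cosymplectic generalized (κ,μ,ν)-space form
M(f₁,…,f₈) of dimension ≥ 5 with κ = f₁ - f₃ < 0, assuming (a) the curvature of such a
space, as a (f₁-f₃, f₄-f₆, f₇-f₈)-space, equals -(f₁-f₃)R₃ - R_{5,2} - (f₄-f₆)R₆ - (f₇-f₈)R₈,
and (b) the writing of the curvature as a combination of R₁, R₂, R₃, R₄, R_{5,1}, R_{5,2},
R₆, R₇, R₈ is unique. -/
theorem no_cosymplectic_space_form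
    (φ h : V →ₗ[ℝ] V) (ξ : V) (η : V →ₗ[ℝ] ℝ)
    (R : V → V → V → V)
    (f₁ f₂ f₃ f₄ f₅ f₆ f₇ f₈ : ℝ)
    {n : ℕ} (hn : 2 ≤ n) (hdim : Module.finrank ℝ V = 2 * n + 1)
    -- almost contact metric structure
    (hηξ : η ξ = 1)
    (hφ2 : ∀ X : V, φ (φ X) = -X + η X • ξ)
    (hmetric : ∀ X Y : V, ⟪φ X, φ Y⟫_ℝ = ⟪X, Y⟫_ℝ - η X * η Y)
    -- properties of h
    (hsym : ∀ X Y : V, ⟪h X, Y⟫_ℝ = ⟪X, h Y⟫_ℝ)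
    (hhξ : h ξ = 0)
    (hanti : ∀ X : V, h (φ X) = -φ (h X))
    -- κ = f₁ - f₃ < 0
    (hκ : f₁ - f₃ < 0)
    -- the generalized (κ,μ,ν)-space form writing, with R₅ = R_{5,1} - R_{5,2}
    (hR : ∀ X Y Z : V, R X Y Z
        = f₁ • R1 X Y Z + f₂ • R2 φ X Y Z + f₃ • R3 η ξ X Y Z + f₄ • R4 h X Y Z
          + f₅ • (R51 h X Y Z - R52 φ h X Y Z) + f₆ • R6 η ξ h X Y Z
          + f₇ • R7 φ h X Y Z + f₈ • R8 η ξ φ h X Y Z)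
    -- hypothesis (a)
    (ha : ∀ X Y Z : V, R X Y Z
        = -(f₁ - f₃) • R3 η ξ X Y Z - R52 φ h X Y Z - (f₄ - f₆) • R6 η ξ h X Y Z
          - (f₇ - f₈) • R8 η ξ φ h X Y Z)
    -- hypothesis (b): uniqueness of the writing
    (hb : ∀ c₁ c₂ c₃ c₄ c₅₁ c₅₂ c₆ c₇ c₈ d₁ d₂ d₃ d₄ d₅₁ d₅₂ d₆ d₇ d₈ : ℝ,
        (∀ X Y Z : V,
          c₁ • R1 X Y Z + c₂ • R2 φ X Y Z + c₃ • R3 η ξ X Y Z + c₄ • R4 h X Y Z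
            + c₅₁ • R51 h X Y Z + c₅₂ • R52 φ h X Y Z + c₆ • R6 η ξ h X Y Z
            + c₇ • R7 φ h X Y Z + c₈ • R8 η ξ φ h X Y Z
          = d₁ • R1 X Y Z + d₂ • R2 φ X Y Z + d₃ • R3 η ξ X Y Z + d₄ • R4 h X Y Z
            + d₅₁ • R51 h X Y Z + d₅₂ • R52 φ h X Y Z + d₆ • R6 η ξ h X Y Z
            + d₇ • R7 φ h X Y Z + d₈ • R8 η ξ φ h X Y Z) →
        c₁ = d₁ ∧ c₂ = d₂ ∧ c₃ = d₃ ∧ c₄ = d₄ ∧ c₅₁ = d₅₁ ∧ c₅₂ = d₅₂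
          ∧ c₆ = d₆ ∧ c₇ = d₇ ∧ c₈ = d₈) :
    False := by
  have key := hb f₁ f₂ f₃ f₄ f₅ (-f₅) f₆ f₇ f₈ 0 0 (-(f₁-f₃)) 0 0 (-1) (-(f₄-f₆)) 0 (-(f₇-f₈))
    (fun X Y Z => by
      have e := (hR X Y Z).symm.trans (ha X Y Z)
      linear_combination (norm := module) e)
  have h1 : f₅ = (0 : ℝ) := key.2.2.2.2.1
  have h2 : -f₅ = (-1 : ℝ) := key.2.2.2.2.2.1
  rw [h1] at h2
  norm_num at h2
end

section
/- Let M³ be a 3-dimensional almost cosymplectic (resp. almost Kenmotsu) (κ,μ,ν)-space with κ < 0 (resp. κ < -1). Then its Ricci operator satisfies Qξ = 2κξ and QX = (τ/2 - κ)X + (3κ - τ/2)η(X)ξ + μhX + νφhX for every vector field X, where τ is the scalar curvature. -/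
open scoped InnerProductSpace

/-- On a 3-dimensional almost cosymplectic (resp. almost Kenmotsu)
(κ,μ,ν)-space with κ < 0 (resp. κ < -1), the Ricci operator satisfies Qξ = 2κξ and
QX = (τ/2 - κ)X + (3κ - τ/2)η(X)ξ + μhX + νφhX, where τ is the scalar curvature. -/
theorem dim3_ricci_operator
    {V : Type*} [NormedAddCommGroup V] [InnerProductSpace ℝ V] [FiniteDimensional ℝ V]
    (hdim : Module.finrank ℝ V = 3)
    (φ h Q : V →ₗ[ℝ] V) (ξ : V) (η : V →ₗ[ℝ] ℝ)
    (R : V → V → V → V) (κ μ ν τ l : ℝ)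
    -- almost cosymplectic case (κ < 0, λ = √(-κ)) or almost Kenmotsu case (κ < -1, λ = √(-1-κ))
    (hcase : (κ < 0 ∧ l = Real.sqrt (-κ)) ∨ (κ < -1 ∧ l = Real.sqrt (-1 - κ)))
    -- almost contact metric structure
    (hηξ : η ξ = 1)
    (hφ2 : ∀ X : V, φ (φ X) = -X + η X • ξ)
    (hmetric : ∀ X Y : V, ⟪φ X, φ Y⟫_ℝ = ⟪X, Y⟫_ℝ - η X * η Y)
    -- properties of h
    (hsym : ∀ X Y : V, ⟪h X, Y⟫_ℝ = ⟪X, h Y⟫_ℝ)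
    (hhξ : h ξ = 0)
    (hanti : ∀ X : V, h (φ X) = -φ (h X))
    -- the φ-basis {E, φE, ξ} with hE = λE
    (E : V) (hE : h E = l • E) (hEunit : ⟪E, E⟫_ℝ = 1) (hηE : η E = 0)
    (hbasis : ∀ W : V, W = ⟪W, E⟫_ℝ • E + ⟪W, φ E⟫_ℝ • φ E + η W • ξ)
    -- Q is symmetric and τ = tr Q
    (hQsym : ∀ X Y : V, ⟪Q X, Y⟫_ℝ = ⟪X, Q Y⟫_ℝ)
    (hτ : τ = LinearMap.trace ℝ V Q)
    -- the curvature identity valid on any Riemannian 3-manifold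
    (hR3 : ∀ X Y Z : V, R X Y Z
        = ⟪Y, Z⟫_ℝ • Q X - ⟪X, Z⟫_ℝ • Q Y + ⟪Q Y, Z⟫_ℝ • X - ⟪Q X, Z⟫_ℝ • Y
          - (τ / 2) • (⟪Y, Z⟫_ℝ • X - ⟪X, Z⟫_ℝ • Y))
    -- the (κ,μ,ν) curvature condition
    (hRξ : ∀ X Y : V, R ξ X Y
        = κ • (⟪X, Y⟫_ℝ • ξ - η Y • X) + μ • (⟪h X, Y⟫_ℝ • ξ - η Y • h X)
          + ν • (⟪φ (h X), Y⟫_ℝ • ξ - η Y • φ (h X)))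
    (hRskew : ∀ X Y Z : V, R X Y Z = -R Y X Z) :
    Q ξ = (2 * κ) • ξ
      ∧ ∀ X : V, Q X = (τ / 2 - κ) • X + ((3 * κ - τ / 2) * η X) • ξ
          + μ • h X + ν • φ (h X) := by
  clear hcase hRskew
  -- φ ξ = 0
  have hφφξ : φ (φ ξ) = 0 := by rw [hφ2 ξ, hηξ, one_smul]; abel
  have hφξeq : φ ξ = η (φ ξ) • ξ := by
    have h2 := hφ2 (φ ξ)
    rw [hφφξ, map_zero] at h2
    linear_combination (norm := module) h2
  have hηφξ : η (φ ξ) = 0 := by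
    have h4 := congrArg φ hφξeq
    rw [hφφξ, map_smul] at h4
    have h5 := congrArg η h4
    rw [map_zero, map_smul, smul_eq_mul] at h5
    exact (mul_self_eq_zero.mp h5.symm)
  have hφξ : φ ξ = 0 := by rw [hφξeq, hηφξ, zero_smul]
  have hξξ : ⟪ξ, ξ⟫_ℝ = 1 := by
    have h1 := hmetric ξ ξ; rw [hφξ, inner_zero_left, hηξ] at h1; linarith
  have hφEφE : ⟪φ E, φ E⟫_ℝ = 1 := by
    have h1 := hmetric E E; rw [hEunit, hηE] at h1; linarith
  have hηφE : η (φ E) = 0 := by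
    have h1 := congrArg η (hbasis (φ E))
    simp only [map_add, map_smul, smul_eq_mul, hηE, hηξ, hφEφE] at h1
    linarith
  have hφEE : ⟪φ E, E⟫_ℝ = 0 := by
    have h1 := hbasis (φ E)
    rw [hηφE, zero_smul, add_zero, hφEφE, one_smul] at h1
    have h2 : ⟪φ E, E⟫_ℝ • E = 0 := by linear_combination (norm := module) -h1
    have h3 := congrArg (fun W => ⟪W, E⟫_ℝ) h2
    simp only [real_inner_smul_left, hEunit, mul_one, inner_zero_left] at h3
    exact h3
  have hEφE : ⟪E, φ E⟫_ℝ = 0 := by rw [real_inner_comm]; exact hφEE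
  have hξbase : ⟪ξ, E⟫_ℝ • E + ⟪ξ, φ E⟫_ℝ • φ E = 0 := by
    have h1 := hbasis ξ
    rw [hηξ, one_smul] at h1
    linear_combination (norm := module) -h1
  have hξE : ⟪ξ, E⟫_ℝ = 0 := by
    have h3 := congrArg (fun W => ⟪W, E⟫_ℝ) hξbase
    simp only [inner_add_left, real_inner_smul_left, hEunit, hφEE, mul_one, mul_zero,
      add_zero, inner_zero_left] at h3
    exact h3
  have hξφE : ⟪ξ, φ E⟫_ℝ = 0 := by
    have h3 := congrArg (fun W => ⟪W, φ E⟫_ℝ) hξbase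
    simp only [inner_add_left, real_inner_smul_left, hEφE, hφEφE, mul_one, mul_zero,
      zero_add, inner_zero_left] at h3
    exact h3
  have hEξ : ⟪E, ξ⟫_ℝ = 0 := by rw [real_inner_comm]; exact hξE
  have hφEξ : ⟪φ E, ξ⟫_ℝ = 0 := by rw [real_inner_comm]; exact hξφE
  have hWξ : ∀ W : V, ⟪W, ξ⟫_ℝ = η W := by
    intro W
    have h1 := congrArg (fun X => ⟪X, ξ⟫_ℝ) (hbasis W)
    simp only [inner_add_left, real_inner_smul_left, hEξ, hφEξ, hξξ, mul_zero, mul_one,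
      zero_add, add_zero] at h1
    exact h1
  -- structure facts
  have hφφE : φ (φ E) = -E := by rw [hφ2 E, hηE, zero_smul, add_zero]
  have hhφE : h (φ E) = -(l • φ E) := by rw [hanti E, hE, map_smul]
  have hφhE : φ (h E) = l • φ E := by rw [hE, map_smul]
  have hφhφE : φ (h (φ E)) = l • E := by
    rw [hhφE, map_neg, map_smul, hφφE, smul_neg, neg_neg]
  have hcurv : ∀ X Y : V,
      ⟪X, Y⟫_ℝ • Q ξ - ⟪ξ, Y⟫_ℝ • Q X + ⟪Q X, Y⟫_ℝ • ξ - ⟪Q ξ, Y⟫_ℝ • X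
        - (τ / 2) • (⟪X, Y⟫_ℝ • ξ - ⟪ξ, Y⟫_ℝ • X)
      = κ • (⟪X, Y⟫_ℝ • ξ - η Y • X) + μ • (⟪h X, Y⟫_ℝ • ξ - η Y • h X)
          + ν • (⟪φ (h X), Y⟫_ℝ • ξ - η Y • φ (h X)) := fun X Y =>
    (hR3 ξ X Y).symm.trans (hRξ X Y)
  have e1 := hcurv E (φ E)
  have e2 := hcurv (φ E) E
  have e3 := hcurv E E
  have e4 := hcurv (φ E) (φ E)
  have e5 := hcurv E ξ
  have e6 := hcurv (φ E) ξ
  simp only [hE, hhφE, hφhE, hφhφE, map_smul, map_neg, hφφE, hEφE, hξφE, hηφE,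
    real_inner_smul_left, inner_neg_left, hEunit, hφEφE, hφEE,
    hξE, hξξ, hEξ, hφEξ, hηE, hηξ, smul_smul, zero_smul, smul_zero, one_smul, mul_one,
    one_mul, mul_zero, zero_mul, zero_sub, sub_zero, add_zero, zero_add, neg_zero, smul_neg,
    neg_neg, mul_neg, neg_smul] at e1 e2 e3 e4 e5 e6
  -- ⟪Qξ, φE⟫ = 0 from e1, ⟪Qξ, E⟫ = 0 from e2
  have hQξφE : ⟪Q ξ, φ E⟫_ℝ = 0 := by
    have h1 := congrArg (fun W => ⟪W, E⟫_ℝ) e1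
    simp only [inner_add_left, inner_sub_left, inner_neg_left, real_inner_smul_left,
      hEunit, hφEE, hξE, mul_one, mul_zero, zero_sub, sub_zero, add_zero, zero_add,
      neg_zero, inner_zero_left] at h1
    linarith
  have hQξE : ⟪Q ξ, E⟫_ℝ = 0 := by
    have h1 := congrArg (fun W => ⟪W, φ E⟫_ℝ) e2
    simp only [inner_add_left, inner_sub_left, inner_neg_left, real_inner_smul_left,
      hEφE, hφEφE, hξφE, mul_one, mul_zero, zero_sub, sub_zero, add_zero, zero_add,
      neg_zero, inner_zero_left] at h1
    linarith
  -- Q ξ is proportional to ξ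
  have hQξexp : Q ξ = η (Q ξ) • ξ := by
    have h1 := hbasis (Q ξ)
    rw [hQξE, hQξφE, zero_smul, zero_smul, zero_add, zero_add] at h1
    exact h1
  have hQξξ : ⟪Q ξ, ξ⟫_ℝ = η (Q ξ) := hWξ (Q ξ)
  -- scalar relations from e3, e4
  have r3 : ⟪Q ξ, ξ⟫_ℝ + ⟪Q E, E⟫_ℝ - τ / 2 = κ + μ * l := by
    have h1 := congrArg (fun W => ⟪W, ξ⟫_ℝ) e3
    simp only [inner_add_left, inner_sub_left, inner_neg_left, real_inner_smul_left,
      hξξ, hEξ, hφEξ, mul_one, mul_zero, zero_sub, sub_zero, add_zero, zero_add,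
      neg_zero, inner_zero_left] at h1
    linarith
  have r4 : ⟪Q ξ, ξ⟫_ℝ + ⟪Q (φ E), φ E⟫_ℝ - τ / 2 = κ - μ * l := by
    have h1 := congrArg (fun W => ⟪W, ξ⟫_ℝ) e4
    simp only [inner_add_left, inner_sub_left, inner_neg_left, real_inner_smul_left,
      hξξ, hEξ, hφEξ, mul_one, mul_zero, zero_sub, sub_zero, add_zero, zero_add,
      neg_zero, inner_zero_left] at h1
    linarith
  -- trace computation
  have hli : LinearIndependent ℝ ![E, φ E, ξ] := by
    rw [Fintype.linearIndependent_iff]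
    intro g hg
    rw [Fin.sum_univ_three] at hg
    simp only [Matrix.cons_val_zero, Matrix.cons_val_one, Matrix.head_cons,
      Matrix.cons_val_two, Matrix.tail_cons] at hg
    have hgE := congrArg (fun W => ⟪W, E⟫_ℝ) hg
    have hgφE := congrArg (fun W => ⟪W, φ E⟫_ℝ) hg
    have hgξ := congrArg (fun W => ⟪W, ξ⟫_ℝ) hg
    simp only [inner_add_left, real_inner_smul_left, hEunit, hφEE, hEφE, hφEφE, hξE,
      hξφE, hξξ, hEξ, hφEξ, inner_zero_left, mul_one, mul_zero, add_zero, zero_add] at hgE hgφE hgξ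
    intro i
    fin_cases i
    · exact hgE
    · exact hgφE
    · exact hgξ
  have hcard : Fintype.card (Fin 3) = Module.finrank ℝ V := by simp [hdim]
  set b : Module.Basis (Fin 3) ℝ V := basisOfLinearIndependentOfCardEqFinrank hli hcard with hbdef
  have hb : ⇑b = ![E, φ E, ξ] := coe_basisOfLinearIndependentOfCardEqFinrank hli hcard
  have hb0 : b 0 = E := by rw [hb]; rfl
  have hb1 : b 1 = φ E := by rw [hb]; rfl
  have hb2 : b 2 = ξ := by rw [hb]; rfl
  have hrepr : ∀ (W : V) (x y z : ℝ), W = x • E + y • φ E + z • ξ →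
      b.repr W 0 = x ∧ b.repr W 1 = y ∧ b.repr W 2 = z := by
    intro W x y z hW
    have hW' : W = x • b 0 + y • b 1 + z • b 2 := by rw [hb0, hb1, hb2]; exact hW
    rw [hW']
    simp [map_add, map_smul, Module.Basis.repr_self, Finsupp.single_apply]
  have htr : τ = b.repr (Q (b 0)) 0 + b.repr (Q (b 1)) 1 + b.repr (Q (b 2)) 2 := by
    rw [hτ, LinearMap.trace_eq_matrix_trace ℝ b Q, Matrix.trace]
    simp [Matrix.diag, LinearMap.toMatrix_apply, Fin.sum_univ_three]
  have hd0 := (hrepr (Q E) _ _ _ (hbasis (Q E))).1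
  have hd1 := (hrepr (Q (φ E)) _ _ _ (hbasis (Q (φ E)))).2.1
  have hd2 := (hrepr (Q ξ) _ _ _ (hbasis (Q ξ))).2.2
  rw [hb0, hb1, hb2, hd0, hd1, hd2] at htr
  -- htr : τ = ⟪Q E, E⟫ + ⟪Q (φ E), φ E⟫ + η (Q ξ)
  have hc : η (Q ξ) = 2 * κ := by
    rw [← hQξξ] at htr ⊢
    linarith
  have hQξval : Q ξ = (2 * κ) • ξ := by rw [hQξexp, hc]
  refine ⟨hQξval, ?_⟩
  -- inner products of QE, QφE with ξ vanish
  have hQEξ : ⟪Q E, ξ⟫_ℝ = 0 := by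
    rw [hQsym, hQξval, real_inner_smul_right, hEξ, mul_zero]
  have hQφEξ : ⟪Q (φ E), ξ⟫_ℝ = 0 := by
    rw [hQsym, hQξval, real_inner_smul_right, hφEξ, mul_zero]
  have hQξξ' : ⟪Q ξ, ξ⟫_ℝ = 2 * κ := by rw [hQξξ, hc]
  rw [hQEξ, hQξξ'] at e5
  rw [hQφEξ, hQξξ'] at e6
  -- Q E and Q (φ E)
  have hQE : Q E = (τ / 2 - κ + μ * l) • E + (ν * l) • φ E := by
    linear_combination (norm := module) -e5
  have hQφE : Q (φ E) = (ν * l) • E + (τ / 2 - κ - μ * l) • φ E := by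
    linear_combination (norm := module) -e6
  -- general X
  intro X
  have hbX := hbasis X
  have hQX : Q X = ⟪X, E⟫_ℝ • Q E + ⟪X, φ E⟫_ℝ • Q (φ E) + η X • Q ξ := by
    conv_lhs => rw [hbX]
    rw [map_add, map_add, map_smul, map_smul, map_smul]
  rw [hQE, hQφE, hQξval] at hQX
  have hhX : h X = (⟪X, E⟫_ℝ * l) • E - (⟪X, φ E⟫_ℝ * l) • φ E := by
    conv_lhs => rw [hbX]
    rw [map_add, map_add, map_smul, map_smul, map_smul, hE, hhφE, hhξ]
    module
  have hφhX : φ (h X) = (⟪X, φ E⟫_ℝ * l) • E + (⟪X, E⟫_ℝ * l) • φ E := by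
    rw [hhX, map_sub, map_smul, map_smul, hφφE]
    module
  linear_combination (norm := module) hQX - (τ / 2 - κ) • hbX - μ • hhX - ν • hφhX
end
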